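/- The population gradient of the log-likelihood of the truncated linear regression model satisfies ∇ℓ̄(w) = (1/n)·Σ_{i=1}^n E_{y ~ N(⟨w*,x^(i)⟩,1,S)}[y]·x^(i) − (1/n)·Σ_{i=1}^n E_{z ~ N(⟨w,x^(i)⟩,1,S)}[z]·x^(i), for every w ∈ ℝ^k, provided S has positive Gaussian mass under every mean ⟨w,x^(i)⟩ and ⟨w*,x^(i)⟩. -/

import Mathlib

open MeasureTheory ProbabilityTheory Real
open scoped RealInnerProductSpace ENNReal

/-- The survival probability `α(μ; S) = N(μ,1)(S)`. -/
noncomputable def survival (μ : ℝ) (S : Set ℝ) : ℝ :=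
  (gaussianReal μ 1 S).toReal

/-- The truncated Gaussian `N(μ,1,S)`, i.e. `N(μ,1)` conditioned on `S`. -/
noncomputable def truncGaussian (μ : ℝ) (S : Set ℝ) : Measure ℝ :=
  (gaussianReal μ 1)[|S]

/-- The population log-likelihood of the truncated linear regression model. -/
noncomputable def popLogLik {k n : ℕ} (S : Set ℝ) (x : Fin n → EuclideanSpace ℝ (Fin k))
    (wstar : EuclideanSpace ℝ (Fin k)) (w : EuclideanSpace ℝ (Fin k)) : ℝ :=
  (1 / n : ℝ) * ∑ i, ∫ y, (-(1 / 2) * (y - ⟪w, x i⟫) ^ 2 -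
      Real.log (∫ z in S, Real.exp (-(z - ⟪w, x i⟫) ^ 2 / 2)))
    ∂(truncGaussian ⟪wstar, x i⟫ S)

/- Auxiliary lemmas -/


lemma pdf_eq (t z : ℝ) : gaussianPDFReal t 1 z = (√(2 * π))⁻¹ * rexp (-(z - t) ^ 2 / 2) := by
  simp [gaussianPDFReal]

lemma int_exp (t : ℝ) {b : ℝ} (hb : 0 < b) :
    Integrable (fun z : ℝ => rexp (-b * (z - t) ^ 2)) :=
  (integrable_exp_neg_mul_sq hb).comp_sub_right t

lemma int_exp' (t : ℝ) : Integrable (fun z : ℝ => rexp (-(z - t) ^ 2 / 2)) := by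
  have := int_exp t (b := 1/2) (by norm_num)
  refine this.congr (ae_of_all _ fun z => ?_)
  ring_nf

lemma survival_eq (S : Set ℝ) (hS : MeasurableSet S) (t : ℝ) :
    survival t S = (√(2 * π))⁻¹ * ∫ z in S, rexp (-(z - t) ^ 2 / 2) := by
  rw [survival, gaussianReal_apply_eq_integral t one_ne_zero S,
    ENNReal.toReal_ofReal (setIntegral_nonneg hS fun z _ => gaussianPDFReal_nonneg _ _ _)]
  simp_rw [pdf_eq]
  rw [integral_const_mul]

lemma Z_pos {S : Set ℝ} (hS : MeasurableSet S) {t : ℝ} (h : 0 < survival t S) :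
    0 < ∫ z in S, rexp (-(z - t) ^ 2 / 2) := by
  rw [survival_eq S hS] at h
  by_contra hc
  push_neg at hc
  nlinarith [inv_pos.mpr (Real.sqrt_pos.mpr (by positivity : (0:ℝ) < 2 * π)), h]

-- integral over truncated gaussian
lemma integral_trunc (S : Set ℝ) (hS : MeasurableSet S) (t : ℝ) (h : 0 < survival t S)
    (f : ℝ → ℝ) :
    ∫ y, f y ∂(truncGaussian t S)
      = (survival t S)⁻¹ * ∫ z in S, f z * gaussianPDFReal t 1 z := by
  rw [truncGaussian, ProbabilityTheory.cond, integral_smul_measure, ENNReal.toReal_inv]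
  rw [gaussianReal_of_var_ne_zero t one_ne_zero, restrict_withDensity hS]
  have hd : (volume.restrict S).withDensity (gaussianPDF t 1)
      = (volume.restrict S).withDensity (fun z => ((gaussianPDFReal t 1 z).toNNReal : ℝ≥0∞)) := by
    congr 1
  rw [hd, integral_withDensity_eq_integral_smul (by
      exact (measurable_gaussianPDFReal t 1).real_toNNReal)]
  congr 1
  · rw [survival, gaussianReal_of_var_ne_zero t one_ne_zero]
  · refine setIntegral_congr_fun hS fun z _ => ?_
    simp [NNReal.smul_def, Real.coe_toNNReal _ (gaussianPDFReal_nonneg _ _ _), mul_comm]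
lemma trunc_prob {S : Set ℝ} {t : ℝ} (h : 0 < survival t S) :
    IsProbabilityMeasure (truncGaussian t S) := by
  refine cond_isProbabilityMeasure ?_
  intro hc
  simp [survival, hc] at h

-- integrability under gaussian from weighted volume integrability
lemma integrable_gauss {t : ℝ} {g : ℝ → ℝ} (hg : AEStronglyMeasurable g volume)
    (hig : Integrable (fun z => g z * gaussianPDFReal t 1 z)) :
    Integrable g (gaussianReal t 1) := by
  rw [gaussianReal_of_var_ne_zero t one_ne_zero]
  rw [integrable_withDensity_iff (measurable_gaussianPDF t 1)
    (ae_of_all _ fun z => ENNReal.ofReal_lt_top)]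
  refine hig.congr (ae_of_all _ fun z => ?_)
  simp [gaussianPDF, ENNReal.toReal_ofReal (gaussianPDFReal_nonneg _ _ _)]

lemma integrable_trunc {S : Set ℝ} {t : ℝ} (h : 0 < survival t S) {g : ℝ → ℝ}
    (hg : AEStronglyMeasurable g volume)
    (hig : Integrable (fun z => g z * gaussianPDFReal t 1 z)) :
    Integrable g (truncGaussian t S) := by
  rw [truncGaussian, ProbabilityTheory.cond]
  exact ((integrable_gauss hg hig).restrict).smul_measure (by
    simp only [ne_eq, ENNReal.inv_eq_top]
    intro hc; simp [survival, hc] at h)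
lemma int_abs_exp (t : ℝ) {b : ℝ} (hb : 0 < b) :
    Integrable (fun z : ℝ => |z - t| * rexp (-b * (z - t) ^ 2)) := by
  have h := ((integrable_mul_exp_neg_mul_sq hb).abs).comp_sub_right t
  refine h.congr (ae_of_all _ fun z => ?_)
  simp [abs_mul, abs_of_nonneg (Real.exp_nonneg _)]

lemma hasDerivAt_phi (z x : ℝ) :
    HasDerivAt (fun x => rexp (-(z - x) ^ 2 / 2)) ((z - x) * rexp (-(z - x) ^ 2 / 2)) x := by
  have h1 : HasDerivAt (fun x : ℝ => z - x) (-1) x := (hasDerivAt_id x).const_sub z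
  have h2 : HasDerivAt (fun x : ℝ => -(z - x) ^ 2 / 2) (z - x) x := by
    have := ((h1.pow 2).neg).div_const 2
    refine this.congr_deriv (Eq.symm ?_)
    ring
  have := h2.exp
  convert this using 1
  ring

lemma hasDerivAt_Z (S : Set ℝ) (hS : MeasurableSet S) (t : ℝ) :
    HasDerivAt (fun x => ∫ z in S, rexp (-(z - x) ^ 2 / 2))
      (∫ z in S, (z - t) * rexp (-(z - t) ^ 2 / 2)) t := by
  have key := hasDerivAt_integral_of_dominated_loc_of_deriv_le
    (μ := volume.restrict S) (x₀ := t)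
    (F := fun x z => rexp (-(z - x) ^ 2 / 2))
    (F' := fun x z => (z - x) * rexp (-(z - x) ^ 2 / 2))
    (bound := fun z => rexp 1 * ((|z - t| + 1) * rexp (-(z - t) ^ 2 / 4)))
    (s := Metric.ball t 1) (Metric.ball_mem_nhds t one_pos)
    ?_ ?_ ?_ ?_ ?_ ?_
  · exact key.2
  · filter_upwards with x
    exact (Continuous.aestronglyMeasurable (by continuity)).restrict
  · refine Integrable.restrict ?_
    have := int_exp t (b := 1/2) (by norm_num)
    refine this.congr (ae_of_all _ fun z => ?_); ring_nf
  · exact (Continuous.aestronglyMeasurable (by continuity)).restrict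
  · filter_upwards with z x hx
    have hx1 : |x - t| < 1 := by simpa [Metric.mem_ball, Real.dist_eq] using hx
    rw [norm_mul, Real.norm_eq_abs, Real.norm_eq_abs, abs_of_nonneg (Real.exp_nonneg _)]
    have h1 : |z - x| ≤ |z - t| + 1 := by
      have : z - x = (z - t) + (t - x) := by ring
      rw [this]
      refine (abs_add_le _ _).trans ?_
      have : |t - x| ≤ 1 := by rw [abs_sub_comm]; linarith
      linarith [abs_nonneg (z - t)]
    have h2 : rexp (-(z - x) ^ 2 / 2) ≤ rexp 1 * rexp (-(z - t) ^ 2 / 4) := by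
      rw [← Real.exp_add]
      refine Real.exp_le_exp.mpr ?_
      nlinarith [sq_nonneg ((z - t) - 2 * (x - t)), sq_nonneg (x - t), abs_nonneg (x-t),
        sq_abs (x - t), hx1, sq_nonneg (z - x)]
    calc |z - x| * rexp (-(z - x) ^ 2 / 2)
        ≤ (|z - t| + 1) * (rexp 1 * rexp (-(z - t) ^ 2 / 4)) := by
          apply mul_le_mul h1 h2 (Real.exp_nonneg _) (by positivity)
      _ = rexp 1 * ((|z - t| + 1) * rexp (-(z - t) ^ 2 / 4)) := by ring
  · refine Integrable.restrict ?_
    refine Integrable.const_mul ?_ _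
    have h1 := int_abs_exp t (b := 1/4) (by norm_num)
    have h2 := int_exp t (b := 1/4) (by norm_num)
    have := h1.add h2
    refine this.congr (ae_of_all _ fun z => ?_)
    simp only [Pi.add_apply]
    ring_nf
  · filter_upwards with z x _
    exact hasDerivAt_phi z x
lemma int_sq_exp (t : ℝ) {b : ℝ} (hb : 0 < b) :
    Integrable (fun z : ℝ => (z - t) ^ 2 * rexp (-b * (z - t) ^ 2)) := by
  have h := (integrable_rpow_mul_exp_neg_mul_sq hb (by norm_num : (-1:ℝ) < 2)).comp_sub_right t
  refine h.congr (ae_of_all _ fun z => ?_)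
  simp

lemma intA (a : ℝ) : Integrable (fun z : ℝ => rexp (-(z - a) ^ 2 / 2)) := by
  refine (int_exp a (b := 1/2) (by norm_num)).congr (ae_of_all _ fun z => ?_); ring_nf

lemma int1A (a : ℝ) : Integrable (fun z : ℝ => (z - a) * rexp (-(z - a) ^ 2 / 2)) := by
  have hb : Integrable (fun z : ℝ => |z - a| * rexp (-(z - a) ^ 2 / 2)) := by
    refine (int_abs_exp a (b := 1/2) (by norm_num)).congr (ae_of_all _ fun z => ?_); ring_nf
  refine Integrable.mono' hb
    (Continuous.aestronglyMeasurable (by continuity)) (ae_of_all _ fun z => ?_)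
  rw [norm_mul, Real.norm_eq_abs, Real.norm_eq_abs, abs_of_nonneg (Real.exp_nonneg _)]

lemma int2A (a : ℝ) : Integrable (fun z : ℝ => (z - a) ^ 2 * rexp (-(z - a) ^ 2 / 2)) := by
  refine (int_sq_exp a (b := 1/2) (by norm_num)).congr (ae_of_all _ fun z => ?_); ring_nf

lemma int_pdf_quad (a c0 c1 c2 : ℝ) :
    Integrable (fun z => (c0 + c1 * z + c2 * z ^ 2) * gaussianPDFReal a 1 z) := by
  have h := ((((intA a).const_mul (c0 + c1 * a + c2 * a ^ 2)).add
      (((int1A a).const_mul (c1 + 2 * c2 * a)).add ((int2A a).const_mul c2))).const_mul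
      (√(2 * π))⁻¹)
  refine h.congr (ae_of_all _ fun z => ?_)
  simp only [Pi.add_apply, pdf_eq]
  ring


lemma key_deriv (S : Set ℝ) (hS : MeasurableSet S) (a b : ℝ)
    (ha : 0 < survival a S) (hb : 0 < survival b S) :
    HasDerivAt (fun t => ∫ y, (-(1 / 2) * (y - t) ^ 2 -
        Real.log (∫ z in S, rexp (-(z - t) ^ 2 / 2))) ∂(truncGaussian a S))
      ((∫ y, y ∂(truncGaussian a S)) - ∫ z, z ∂(truncGaussian b S)) b := by
  haveI := trunc_prob ha
  set ν := truncGaussian a S with hν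
  set M := ∫ y, y ∂ν with hM
  set S2 := ∫ y, y ^ 2 ∂ν with hS2
  have hZb : 0 < ∫ z in S, rexp (-(z - b) ^ 2 / 2) := Z_pos hS hb
  have int_y : Integrable (fun y : ℝ => y) ν := by
    refine integrable_trunc ha (Continuous.aestronglyMeasurable (by continuity)) ?_
    refine (int_pdf_quad a 0 1 0).congr (ae_of_all _ fun z => by ring_nf)
  have int_y2 : Integrable (fun y : ℝ => y ^ 2) ν := by
    refine integrable_trunc ha (Continuous.aestronglyMeasurable (by continuity)) ?_
    refine (int_pdf_quad a 0 0 1).congr (ae_of_all _ fun z => by ring_nf)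
  have int_quad : ∀ t : ℝ, Integrable (fun y : ℝ => -(1 / 2) * (y - t) ^ 2) ν := by
    intro t
    refine integrable_trunc ha (Continuous.aestronglyMeasurable (by continuity)) ?_
    refine (int_pdf_quad a (-(t ^ 2 / 2)) t (-(1 / 2))).congr (ae_of_all _ fun z => by ring_nf)
  have hfun : (fun t => ∫ y, (-(1 / 2) * (y - t) ^ 2 -
        Real.log (∫ z in S, rexp (-(z - t) ^ 2 / 2))) ∂ν)
      = fun t => -(1 / 2) * (S2 - 2 * M * t + t ^ 2)
          - Real.log (∫ z in S, rexp (-(z - t) ^ 2 / 2)) := by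
    funext t
    rw [integral_sub (int_quad t) (integrable_const _)]
    congr 1
    · rw [show (fun y : ℝ => -(1 / 2) * (y - t) ^ 2)
          = fun y => (-(t ^ 2 / 2)) + (t * y + (-(1 / 2)) * y ^ 2) from funext fun y => by ring]
      have hg1 : Integrable (fun y : ℝ => t * y + (-(1/2)) * y ^ 2) ν :=
        (int_y.const_mul t).add (int_y2.const_mul (-(1/2)))
      rw [integral_add (integrable_const _) hg1]
      rw [integral_add (int_y.const_mul t) (int_y2.const_mul (-(1/2))),
        integral_const, integral_const_mul, integral_const_mul]
      simp [measure_univ]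
      ring
    · simp [integral_const, measure_univ]
  rw [hfun]
  have hlog := (hasDerivAt_Z S hS b).log hZb.ne'
  have hpoly := (((hasDerivAt_const b S2).sub ((hasDerivAt_id b).const_mul (2 * M))).add
      (hasDerivAt_pow 2 b)).const_mul (-(1/2 : ℝ))
  have total := hpoly.sub hlog
  refine total.congr_deriv (Eq.symm ?_)
  -- value equality
  set W := ∫ z in S, z * rexp (-(z - b) ^ 2 / 2) with hW
  have hintW : Integrable (fun z : ℝ => z * rexp (-(z - b) ^ 2 / 2)) := by
    refine (((int1A b).add ((intA b).const_mul b))).congr (ae_of_all _ fun z => by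
      simp only [Pi.add_apply]; ring_nf)
  have hZd : (∫ z in S, (z - b) * rexp (-(z - b) ^ 2 / 2))
      = W - b * ∫ z in S, rexp (-(z - b) ^ 2 / 2) := by
    rw [show (fun z : ℝ => (z - b) * rexp (-(z - b) ^ 2 / 2))
        = fun z => z * rexp (-(z - b) ^ 2 / 2) - b * rexp (-(z - b) ^ 2 / 2)
        from funext fun z => by ring]
    rw [integral_sub hintW.integrableOn (((intA b).const_mul b).integrableOn),
      integral_const_mul]
  have hm : (∫ z, z ∂(truncGaussian b S))
      = ((√(2 * π))⁻¹ * ∫ z in S, rexp (-(z - b) ^ 2 / 2))⁻¹ * ((√(2 * π))⁻¹ * W) := by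
    rw [integral_trunc S hS b hb, survival_eq S hS]
    congr 1
    rw [hW, ← integral_const_mul]
    refine setIntegral_congr_fun hS fun z _ => ?_
    rw [pdf_eq]; ring
  rw [hm, hZd]
  have hc : (0:ℝ) < (√(2 * π))⁻¹ := by positivity
  set Z := ∫ z in S, rexp (-(z - b) ^ 2 / 2) with hZ
  field_simp
  ring



theorem stmt10 {k n : ℕ} (S : Set ℝ) (hS : MeasurableSet S)
    (x : Fin n → EuclideanSpace ℝ (Fin k)) (wstar w : EuclideanSpace ℝ (Fin k))
    (hposw : ∀ i, 0 < survival ⟪w, x i⟫ S)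
    (hposstar : ∀ i, 0 < survival ⟪wstar, x i⟫ S) :
    HasGradientAt (popLogLik S x wstar)
      ((1 / n : ℝ) • ∑ i, (∫ y, y ∂(truncGaussian ⟪wstar, x i⟫ S)) • x i -
        (1 / n : ℝ) • ∑ i, (∫ z, z ∂(truncGaussian ⟪w, x i⟫ S)) • x i) w := by
  unfold popLogLik
  rw [hasGradientAt_iff_hasFDerivAt]

  have hG : ∀ i : Fin n, HasFDerivAt (fun w' : EuclideanSpace ℝ (Fin k) =>
      ∫ y, (-(1 / 2) * (y - ⟪w', x i⟫) ^ 2 -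
        Real.log (∫ z in S, rexp (-(z - ⟪w', x i⟫) ^ 2 / 2))) ∂(truncGaussian ⟪wstar, x i⟫ S))
      (((∫ y, y ∂(truncGaussian ⟪wstar, x i⟫ S)) -
        ∫ z, z ∂(truncGaussian ⟪w, x i⟫ S)) • innerSL ℝ (x i)) w := by
    intro i
    have hin : HasFDerivAt (fun w' : EuclideanSpace ℝ (Fin k) => ⟪w', x i⟫)
        (innerSL ℝ (x i)) w := by
      have he : (fun w' : EuclideanSpace ℝ (Fin k) => ⟪w', x i⟫)
          = fun w' => (innerSL ℝ (x i)) w' := funext fun w' => (real_inner_comm w' (x i)).symm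
      rw [he]
      exact (innerSL ℝ (x i)).hasFDerivAt
    exact (key_deriv S hS _ _ (hposstar i) (hposw i)).comp_hasFDerivAt w hin
  have hsum := HasFDerivAt.fun_sum (fun i (_ : i ∈ Finset.univ) => hG i)
  have hfinal := hsum.const_mul ((1 : ℝ) / n)
  refine hfinal.congr_fderiv (Eq.symm ?_)
  apply ContinuousLinearMap.ext
  intro v
  simp only [InnerProductSpace.toDual_apply_apply, inner_sub_left, real_inner_smul_left, sum_inner,
    ContinuousLinearMap.smul_apply, ContinuousLinearMap.coe_sum', Finset.sum_apply,
    innerSL_apply_apply, smul_eq_mul]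
  rw [← mul_sub, ← Finset.sum_sub_distrib]
  congr 1
  refine Finset.sum_congr rfl fun i _ => by ring
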